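/- Let D ⊆ E admit a d-flow and let e ∈ E. Then A(D) = A(D + e) and A(D) = A(D − e) both hold if and only if A(D) = A(D ⊕ e) and A(D) = A(D ⊕ rev e) both hold. -/
import Mathlib


open Finset

section Defs

variable {V : Type*}

/-- Reversal of a directed edge. -/
def drev (e : V × V) : V × V := (e.2, e.1)

/-- `K` is a subgraph of the (symmetric) edge set `E`: it contains either both or
neither of `e` and `drev e` for every `e ∈ E`. -/
def IsSubgraph [DecidableEq V] (E K : Finset (V × V)) : Prop :=
  K ⊆ E ∧ ∀ e ∈ E, (e ∈ K ↔ drev e ∈ K)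

/-- `L` is an orientation of the (symmetric) edge set `E`: it contains exactly one of
`e` and `drev e` for every `e ∈ E`. -/
def IsOrientation [DecidableEq V] (E L : Finset (V × V)) : Prop :=
  L ⊆ E ∧ ∀ e ∈ E, (e ∈ L ↔ drev e ∉ L)

variable [Fintype V] [DecidableEq V]

/-- `f` is a `d`-flow on the directed subgraph `D` of the graph with edge set `E`. -/
def IsFlow (E D : Finset (V × V)) (d : V → ℤ) (f : V × V → ℝ) : Prop :=
  (∀ e ∈ E, 0 ≤ f e ∧ f e ≤ 1) ∧
  (∀ e, e ∉ D → f e = 0) ∧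
  ∀ u : V,
    ((Finset.univ.filter (fun v : V => (u, v) ∈ E)).sum fun v => f (u, v)) -
      ((Finset.univ.filter (fun v : V => (v, u) ∈ E)).sum fun v => f (v, u)) = (d u : ℝ)

/-- A `d`-flow exists on `D`. -/
def AdmitsFlow (E D : Finset (V × V)) (d : V → ℤ) : Prop :=
  ∃ f : V × V → ℝ, IsFlow E D d f

/-- The `w`-cost of a flow `f`. -/
def flowCost (E : Finset (V × V)) (w : V × V → ℝ) (f : V × V → ℝ) : ℝ :=
  ∑ e ∈ E, w e * f e

/-- `f` is a min-cost `d`-flow on `D`. -/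
def IsMinCostFlow (E D : Finset (V × V)) (d : V → ℤ) (w : V × V → ℝ)
    (f : V × V → ℝ) : Prop :=
  IsFlow E D d f ∧ ∀ g : V × V → ℝ, IsFlow E D d g → flowCost E w f ≤ flowCost E w g

/-- The `{0,1}`-valued function determined by a set of edges. -/
def ind (S : Finset (V × V)) : V × V → ℝ := fun e => if e ∈ S then 1 else 0

/-- `A` assigns to every flow-admitting `D ⊆ E` the (edge set of the) unique,
`{0,1}`-valued min-cost `d`-flow on `D`. -/
def GoodA (E : Finset (V × V)) (d : V → ℤ) (w : V × V → ℝ)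
    (A : Finset (V × V) → Finset (V × V)) : Prop :=
  ∀ D : Finset (V × V), D ⊆ E → AdmitsFlow E D d →
    IsMinCostFlow E D d w (ind (A D)) ∧
    ∀ f : V × V → ℝ, IsMinCostFlow E D d w f → f = ind (A D)

/-- `A(D) = A(D')`: both `D` and `D'` admit a `d`-flow and their unique min-cost
`d`-flows coincide.  (If one of them admits no `d`-flow this is false.) -/
def AEq (E : Finset (V × V)) (d : V → ℤ) (A : Finset (V × V) → Finset (V × V))
    (D D' : Finset (V × V)) : Prop :=
  AdmitsFlow E D d ∧ AdmitsFlow E D' d ∧ A D = A D'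

/-- `D ⊕ e := (D ∪ {e}) \ {drev e}`. -/
def oplus (D : Finset (V × V)) (e : V × V) : Finset (V × V) := insert e D \ {drev e}

/-- `D + e := D ∪ {e, drev e}`. -/
def padd (D : Finset (V × V)) (e : V × V) : Finset (V × V) := D ∪ {e, drev e}

/-- `D − e := D \ {e, drev e}`. -/
def psub (D : Finset (V × V)) (e : V × V) : Finset (V × V) := D \ {e, drev e}

/-- The representative of `{e, drev e}` lying in the reference orientation `E'`. -/
def chi (E' : Finset (V × V)) (e : V × V) : V × V := if e ∈ E' then e else drev e

/-- The map `φ_e`. -/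
noncomputable def phiE (E : Finset (V × V)) (d : V → ℤ)
    (A : Finset (V × V) → Finset (V × V)) (E' : Finset (V × V))
    (e : V × V) (D : Finset (V × V)) : Finset (V × V) := by
  classical
  exact
    if ¬ AEq E d A D (oplus D e) then oplus D (drev e)
    else if ¬ AEq E d A D (oplus D (drev e)) then oplus D e
    else if e ∈ D then oplus D (chi E' e) else oplus D (drev (chi E' e))

/-- The map `ψ_e`. -/
noncomputable def psiE (E : Finset (V × V)) (d : V → ℤ)
    (A : Finset (V × V) → Finset (V × V)) (E' : Finset (V × V))
    (e : V × V) (D : Finset (V × V)) : Finset (V × V) := by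
  classical
  exact
    if ¬ AEq E d A D (padd D e) then psub D e
    else if ¬ AEq E d A D (psub D e) then padd D e
    else if chi E' e ∈ D then padd D e else psub D e

end Defs

set_option linter.unusedSectionVars false

section Aux

variable {V : Type*} [Fintype V] [DecidableEq V]

lemma ind_inj {S T : Finset (V × V)} (h : ind S = ind T) : S = T := by
  ext x
  have := congrFun h x
  unfold ind at this
  by_cases hs : x ∈ S <;> by_cases ht : x ∈ T <;> simp [hs, ht] at this ⊢

lemma flow_mono {E D D' : Finset (V × V)} {d : V → ℤ} {f : V × V → ℝ}
    (hDD : D ⊆ D') (hf : IsFlow E D d f) : IsFlow E D' d f :=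
  ⟨hf.1, fun x hx => hf.2.1 x (fun hxD => hx (hDD hxD)), hf.2.2⟩

lemma flow_support {E D S : Finset (V × V)} {d : V → ℤ}
    (hf : IsFlow E D d (ind S)) : S ⊆ D := by
  intro x hx
  by_contra hxD
  have := hf.2.1 x hxD
  simp [ind, hx] at this

lemma flow_of_support {E D D' S : Finset (V × V)} {d : V → ℤ}
    (hf : IsFlow E D d (ind S)) (hS : S ⊆ D') : IsFlow E D' d (ind S) := by
  refine ⟨hf.1, fun x hx => ?_, hf.2.2⟩
  have : x ∉ S := fun h => hx (hS h)
  simp [ind, this]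

lemma A_eq_of_minCost {E : Finset (V × V)} {d : V → ℤ} {w : V × V → ℝ}
    {A : Finset (V × V) → Finset (V × V)} (hA : GoodA E d w A)
    {D' X : Finset (V × V)} (hD' : D' ⊆ E) (hadm : AdmitsFlow E D' d)
    (h : IsMinCostFlow E D' d w (ind X)) : A D' = X :=
  (ind_inj ((hA D' hD' hadm).2 (ind X) h)).symm

/-- transfer min-cost down to a subset containing the support -/
lemma minCost_down {E D' D'' X : Finset (V × V)} {d : V → ℤ} {w : V × V → ℝ}
    (hsub : D' ⊆ D'') (hX : X ⊆ D')
    (h : IsMinCostFlow E D'' d w (ind X)) : IsMinCostFlow E D' d w (ind X) := by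
  refine ⟨flow_of_support h.1 hX, fun g hg => h.2 g (flow_mono hsub hg)⟩

lemma sum_ind_out (E : Finset (V × V)) (a : V × V) (ha : a ∈ E) (u : V) :
    (∑ v ∈ Finset.univ.filter (fun v => (u, v) ∈ E),
      (if (u, v) = a then (1:ℝ) else 0)) = if u = a.1 then 1 else 0 := by
  rcases eq_or_ne u a.1 with h | h
  · rw [if_pos h]
    rw [Finset.sum_eq_single a.2]
    · simp [Prod.ext_iff, h]
    · intro v _ hv
      rw [if_neg]
      rintro rfl
      exact hv rfl
    · intro hne
      refine absurd ?_ hne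
      simp only [Finset.mem_filter, Finset.mem_univ, true_and]
      rw [h, Prod.mk.eta]
      exact ha
  · rw [if_neg h]
    apply Finset.sum_eq_zero
    intro v _
    rw [if_neg]
    rintro rfl
    exact h rfl

lemma sum_ind_in (E : Finset (V × V)) (a : V × V) (ha : a ∈ E) (u : V) :
    (∑ v ∈ Finset.univ.filter (fun v => (v, u) ∈ E),
      (if (v, u) = a then (1:ℝ) else 0)) = if u = a.2 then 1 else 0 := by
  rcases eq_or_ne u a.2 with h | h
  · rw [if_pos h]
    rw [Finset.sum_eq_single a.1]
    · simp [Prod.ext_iff, h]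
    · intro v _ hv
      rw [if_neg]
      rintro rfl
      exact hv rfl
    · intro hne
      refine absurd ?_ hne
      simp only [Finset.mem_filter, Finset.mem_univ, true_and]
      rw [h, Prod.mk.eta]
      exact ha
  · rw [if_neg h]
    apply Finset.sum_eq_zero
    intro v _
    rw [if_neg]
    rintro rfl
    exact h rfl

lemma not_both {E D' Y : Finset (V × V)} {d : V → ℤ} {w : V × V → ℝ}
    {e : V × V} (he : e ∈ E) (hre : drev e ∈ E) (hne : e.1 ≠ e.2)
    (hw : ∀ x ∈ E, 0 < w x)
    (hmin : IsMinCostFlow E D' d w (ind Y)) : ¬(e ∈ Y ∧ drev e ∈ Y) := by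
  rintro ⟨h1, h2⟩
  have hed : e ≠ drev e := by
    intro h
    exact hne (congrArg Prod.fst h)
  have heD' : e ∈ D' := by
    by_contra hx
    have := hmin.1.2.1 e hx
    simp [ind, h1] at this
  have hreD' : drev e ∈ D' := by
    by_contra hx
    have := hmin.1.2.1 (drev e) hx
    simp [ind, h2] at this
  set g : V × V → ℝ :=
    fun x => ind Y x - ((if x = e then 1 else 0) + (if x = drev e then 1 else 0)) with hg
  have hgflow : IsFlow E D' d g := by
    refine ⟨?_, ?_, ?_⟩
    · intro x hx
      rcases eq_or_ne x e with rfl | hxe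
      · simp [hg, ind, h1, hed]
      rcases eq_or_ne x (drev e) with rfl | hxr
      · simp [hg, ind, h2, hed.symm]
      · have := hmin.1.1 x hx
        simp only [hg, if_neg hxe, if_neg hxr, add_zero, sub_zero]
        exact this
    · intro x hx
      have hxe : x ≠ e := fun h => hx (h ▸ heD')
      have hxr : x ≠ drev e := fun h => hx (h ▸ hreD')
      have := hmin.1.2.1 x hx
      simp only [hg, if_neg hxe, if_neg hxr, add_zero, sub_zero]
      exact this
    · intro u
      have hout : (∑ v ∈ Finset.univ.filter (fun v => (u, v) ∈ E), g (u, v))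
          = (∑ v ∈ Finset.univ.filter (fun v => (u, v) ∈ E), ind Y (u, v))
            - ((if u = e.1 then 1 else 0) + (if u = e.2 then 1 else 0)) := by
        simp only [hg]
        rw [Finset.sum_sub_distrib, Finset.sum_add_distrib,
          sum_ind_out E e he u, sum_ind_out E (drev e) hre u]
        rfl
      have hin : (∑ v ∈ Finset.univ.filter (fun v => (v, u) ∈ E), g (v, u))
          = (∑ v ∈ Finset.univ.filter (fun v => (v, u) ∈ E), ind Y (v, u))
            - ((if u = e.2 then 1 else 0) + (if u = e.1 then 1 else 0)) := by
        simp only [hg]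
        rw [Finset.sum_sub_distrib, Finset.sum_add_distrib,
          sum_ind_in E e he u, sum_ind_in E (drev e) hre u]
        rfl
      rw [hout, hin]
      have := hmin.1.2.2 u
      ring_nf
      ring_nf at this
      linarith [this]
  have hcost : flowCost E w g = flowCost E w (ind Y) - (w e + w (drev e)) := by
    unfold flowCost
    simp only [hg, mul_sub, mul_add, Finset.sum_sub_distrib, Finset.sum_add_distrib,
      mul_ite, mul_one, mul_zero, Finset.sum_ite_eq' E, he, hre, if_true]
  have hle := hmin.2 g hgflow
  rw [hcost] at hle
  have h1' := hw e he
  have h2' := hw (drev e) hre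
  linarith

end Aux


theorem minCostFlow_padd_psub_iff_oplus_both
    {V : Type*} [Fintype V] [DecidableEq V]
    (E : Finset (V × V)) (hE_symm : ∀ e, e ∈ E ↔ drev e ∈ E)
    (hE_ne : ∀ e ∈ E, e.1 ≠ e.2)
    (d : V → ℤ) (hd : ∑ u : V, d u = 0)
    (w : V × V → ℝ) (hw : ∀ e ∈ E, 0 < w e)
    (A : Finset (V × V) → Finset (V × V)) (hA : GoodA E d w A)
    (D : Finset (V × V)) (hD : D ⊆ E) (hDf : AdmitsFlow E D d)
    (e : V × V) (he : e ∈ E) :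
    (AEq E d A D (padd D e) ∧ AEq E d A D (psub D e)) ↔
      (AEq E d A D (oplus D e) ∧ AEq E d A D (oplus D (drev e))) := by
    classical
  have hre : drev e ∈ E := (hE_symm e).1 he
  have hne : e ≠ drev e := fun h => hE_ne e he (congrArg Prod.fst h)
  have hrr : drev (drev e) = e := rfl
  have hpaddE : padd D e ⊆ E := by
    intro x hx
    simp only [padd, Finset.mem_union, Finset.mem_insert, Finset.mem_singleton] at hx
    rcases hx with hx | hx | hx
    · exact hD hx
    · exact hx ▸ he
    · exact hx ▸ hre
  have hpsubD : psub D e ⊆ D := Finset.sdiff_subset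
  have hpsubE : psub D e ⊆ E := hpsubD.trans hD
  have hopE : ∀ a : V × V, a ∈ E → oplus D a ⊆ E := by
    intro a ha x hx
    simp only [oplus, Finset.mem_sdiff, Finset.mem_insert] at hx
    rcases hx.1 with hx1 | hx1
    · exact hx1 ▸ ha
    · exact hD hx1
  have h_op1_padd : oplus D e ⊆ padd D e := by
    intro x hx
    simp only [oplus, padd, Finset.mem_sdiff, Finset.mem_insert, Finset.mem_union,
      Finset.mem_singleton] at hx ⊢
    tauto
  have h_op2_padd : oplus D (drev e) ⊆ padd D e := by
    intro x hx
    simp only [oplus, padd, Finset.mem_sdiff, Finset.mem_insert, Finset.mem_union,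
      Finset.mem_singleton] at hx ⊢
    tauto
  have h_psub_op1 : psub D e ⊆ oplus D e := by
    intro x hx
    simp only [psub, oplus, Finset.mem_sdiff, Finset.mem_insert, Finset.mem_singleton] at hx ⊢
    tauto
  have h_psub_op2 : psub D e ⊆ oplus D (drev e) := by
    intro x hx
    simp only [psub, oplus, hrr, Finset.mem_sdiff, Finset.mem_insert,
      Finset.mem_singleton] at hx ⊢
    tauto
  have hD_padd : D ⊆ padd D e := Finset.subset_union_left
  have h_int : ∀ X : Finset (V × V), X ⊆ oplus D e → X ⊆ oplus D (drev e) → X ⊆ psub D e := by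
    intro X h1 h2 x hx
    have hx1 := h1 hx
    have hx2 := h2 hx
    simp only [oplus, hrr, Finset.mem_sdiff, Finset.mem_insert, Finset.mem_singleton]
      at hx1 hx2
    simp only [psub, Finset.mem_sdiff, Finset.mem_insert, Finset.mem_singleton]
    tauto
  obtain ⟨hminD, _⟩ := hA D hD hDf
  have hXD : A D ⊆ D := flow_support hminD.1
  constructor
  · rintro ⟨⟨_, hadm_p, hAp⟩, ⟨_, hadm_s, hAs⟩⟩
    have hminP := (hA (padd D e) hpaddE hadm_p).1
    rw [← hAp] at hminP
    have hminS := (hA (psub D e) hpsubE hadm_s).1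
    rw [← hAs] at hminS
    have hXsub : A D ⊆ psub D e := flow_support hminS.1
    have hmin1 : IsMinCostFlow E (oplus D e) d w (ind (A D)) :=
      minCost_down h_op1_padd (hXsub.trans h_psub_op1) hminP
    have hmin2 : IsMinCostFlow E (oplus D (drev e)) d w (ind (A D)) :=
      minCost_down h_op2_padd (hXsub.trans h_psub_op2) hminP
    have hadm1 : AdmitsFlow E (oplus D e) d := ⟨ind (A D), hmin1.1⟩
    have hadm2 : AdmitsFlow E (oplus D (drev e)) d := ⟨ind (A D), hmin2.1⟩
    exact ⟨⟨hDf, hadm1, (A_eq_of_minCost hA (hopE e he) hadm1 hmin1).symm⟩,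
      ⟨hDf, hadm2, (A_eq_of_minCost hA (hopE _ hre) hadm2 hmin2).symm⟩⟩
  · rintro ⟨⟨_, hadm1, hA1⟩, ⟨_, hadm2, hA2⟩⟩
    have hm1 := (hA (oplus D e) (hopE e he) hadm1).1
    rw [← hA1] at hm1
    have hm2 := (hA (oplus D (drev e)) (hopE _ hre) hadm2).1
    rw [← hA2] at hm2
    have hXps : A D ⊆ psub D e := h_int _ (flow_support hm1.1) (flow_support hm2.1)
    -- psub part
    have hminS : IsMinCostFlow E (psub D e) d w (ind (A D)) :=
      ⟨flow_of_support hminD.1 hXps, fun g hg => hminD.2 g (flow_mono hpsubD hg)⟩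
    have hadmS : AdmitsFlow E (psub D e) d := ⟨ind (A D), hminS.1⟩
    -- padd part
    have hadmP : AdmitsFlow E (padd D e) d := ⟨ind (A D), flow_mono hD_padd hminD.1⟩
    obtain ⟨hminP, _⟩ := hA (padd D e) hpaddE hadmP
    have hYpadd : A (padd D e) ⊆ padd D e := flow_support hminP.1
    have hnb := not_both he hre (hE_ne e he) hw hminP
    have hYX : A (padd D e) = A D := by
      by_cases hcase : drev e ∈ A (padd D e)
      · have heY : e ∉ A (padd D e) := fun h => hnb ⟨h, hcase⟩
        have hYop : A (padd D e) ⊆ oplus D (drev e) := by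
          intro x hx
          have hx' := hYpadd hx
          simp only [padd, Finset.mem_union, Finset.mem_insert, Finset.mem_singleton] at hx'
          simp only [oplus, hrr, Finset.mem_sdiff, Finset.mem_insert, Finset.mem_singleton]
          have hxe : x ≠ e := fun h => heY (h ▸ hx)
          tauto
        have hm := minCost_down h_op2_padd hYop hminP
        have := A_eq_of_minCost hA (hopE _ hre) hadm2 hm
        rw [← this, ← hA2]
      · have hYop : A (padd D e) ⊆ oplus D e := by
          intro x hx
          have hx' := hYpadd hx
          simp only [padd, Finset.mem_union, Finset.mem_insert, Finset.mem_singleton] at hx'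
          simp only [oplus, Finset.mem_sdiff, Finset.mem_insert, Finset.mem_singleton]
          have hxe : x ≠ drev e := fun h => hcase (h ▸ hx)
          tauto
        have hm := minCost_down h_op1_padd hYop hminP
        have := A_eq_of_minCost hA (hopE e he) hadm1 hm
        rw [← this, ← hA1]
    exact ⟨⟨hDf, hadmP, hYX.symm⟩,
      ⟨hDf, hadmS, (A_eq_of_minCost hA hpsubE hadmS hminS).symm⟩⟩
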